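/- For every n ≥ 0, the cardinality of ST(n+1) equals 2^{n+1} times the cardinality of ST(n). -/

import Mathlib

open Finset

namespace STProof

/-- extension of a finite vector by zeros -/
def ext (m : ℕ) (s : Fin m → ℕ) : ℕ → ℕ := fun j => if h : j < m then s ⟨j, h⟩ else 0

/-- number of interlacing triangular arrays with given bottom row (of length m+1) -/
noncomputable def cnt : ℕ → (ℕ → ℕ) → ℕ
  | 0, _ => 1
  | (m+1), x =>
      ∑ s ∈ Fintype.piFinset (fun j : Fin (m+1) => Finset.Icc (x j) (x ((j:ℕ)+1) - 1)),
        cnt m (ext (m+1) s)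

lemma cnt_succ (m : ℕ) (x : ℕ → ℕ) : cnt (m+1) x =
    ∑ s ∈ Fintype.piFinset (fun j : Fin (m+1) => Finset.Icc (x j) (x ((j:ℕ)+1) - 1)),
        cnt m (ext (m+1) s) := rfl

lemma cnt_congr : ∀ (m : ℕ) {x y : ℕ → ℕ}, (∀ j ≤ m, x j = y j) → cnt m x = cnt m y
  | 0, _, _, _ => rfl
  | (m+1), x, y, h => by
      rw [cnt_succ, cnt_succ]
      apply Finset.sum_congr
      · congr 1
        funext j
        rw [h j (by omega), h ((j:ℕ)+1) (by omega)]
      · intro s _; rfl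

lemma cnt_eq_zero {m j : ℕ} (t : ℕ → ℕ) (hj : j < m) (h1 : 1 ≤ t (j+1)) (hle : t (j+1) ≤ t j) :
    cnt m t = 0 := by
  obtain ⟨m', rfl⟩ : ∃ m', m = m' + 1 := ⟨m - 1, by omega⟩
  rw [cnt_succ]
  apply Finset.sum_eq_zero
  intro s hs
  exfalso
  have := Fintype.mem_piFinset.1 hs ⟨j, by omega⟩
  rw [Finset.mem_Icc] at this
  simp only at this
  omega

def IsArr (m : ℕ) (x : ℕ → ℕ) (g : ℕ → ℕ → ℕ) : Prop :=
  (∀ i j, 1 ≤ i → i ≤ m → j ≤ i - 1 →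
    g i j ≤ g (i - 1) j ∧ g (i - 1) j < g i (j + 1)) ∧
  (∀ j, j ≤ m → g m j = x j) ∧
  (∀ i j, ¬(j ≤ i ∧ i ≤ m) → g i j = 0)

/-- entries are bounded by entries lower-right, hence by the bottom row -/
lemma arr_le_bottom {m : ℕ} {x : ℕ → ℕ} {g : ℕ → ℕ → ℕ} (hg : IsArr m x g) :
    ∀ k i j, i + k = m → j ≤ i → g i j ≤ x (j + k) := by
  intro k
  induction k with
  | zero => intro i j hi hj; simp only [Nat.add_zero] at *; subst hi; exact (hg.2.1 j hj).le
  | succ k ih =>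
    intro i j hi hj
    have h1 : g i j < g (i+1) (j+1) := by
      have := (hg.1 (i+1) j (by omega) (by omega) (by omega)).2
      simpa using this
    have h2 : g (i+1) (j+1) ≤ x (j + 1 + k) := ih (i+1) (j+1) (by omega) (by omega)
    calc g i j ≤ g (i+1) (j+1) := h1.le
    _ ≤ x (j + 1 + k) := h2
    _ = x (j + (k+1)) := by ring_nf

lemma arr_finite (m : ℕ) (x : ℕ → ℕ) : {g : ℕ → ℕ → ℕ | IsArr m x g}.Finite := by
  set M := (Finset.range (m+1)).sup x with hM
  have hxM : ∀ j ≤ m, x j ≤ M := fun j hj => Finset.le_sup (by simp; omega)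
  set F : (Fin (m+1) → Fin (m+1) → Fin (M+1)) → (ℕ → ℕ → ℕ) :=
    fun v i j => if h : i ≤ m ∧ j ≤ i then (v ⟨i, by omega⟩ ⟨j, by omega⟩ : ℕ) else 0 with hF
  apply Set.Finite.subset (Set.finite_range F)
  intro g hg
  simp only [Set.mem_setOf_eq] at hg
  have hbd : ∀ i j, i ≤ m → j ≤ i → g i j ≤ M := by
    intro i j hi hj
    calc g i j ≤ x (j + (m - i)) := arr_le_bottom hg (m-i) i j (by omega) hj
    _ ≤ M := hxM _ (by omega)
  refine ⟨fun i j => if h : (j:ℕ) ≤ (i:ℕ) ∧ g i j ≤ M then ⟨g i j, by omega⟩ else ⟨0, by omega⟩, ?_⟩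
  funext i j
  rw [hF]
  simp only
  by_cases h : i ≤ m ∧ j ≤ i
  · rw [dif_pos h]
    have : g i j ≤ M := hbd i j h.1 h.2
    rw [dif_pos ⟨h.2, this⟩]
  · rw [dif_neg h]
    exact (hg.2.2 i j (by tauto)).symm

-- base case set equality
lemma isArr_zero (x : ℕ → ℕ) :
    {g : ℕ → ℕ → ℕ | IsArr 0 x g} =
      {fun i j => if i = 0 ∧ j = 0 then x 0 else 0} := by
  ext g
  simp only [Set.mem_setOf_eq, Set.mem_singleton_iff]
  constructor
  · rintro ⟨_, hbot, hout⟩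
    funext i j
    by_cases h : i = 0 ∧ j = 0
    · obtain ⟨rfl, rfl⟩ := h; simp [hbot 0 le_rfl]
    · rw [if_neg h]; exact hout i j (by omega)
  · rintro rfl
    refine ⟨fun i j h1 h2 => by omega, fun j hj => by simp [show j = 0 by omega], ?_⟩
    intro i j h
    simp only [ite_eq_right_iff]
    intro h'; omega

lemma ncard_arr : ∀ (m : ℕ) (x : ℕ → ℕ), (∀ j, j < m → x j < x (j+1)) → 1 ≤ x 0 →
    {g : ℕ → ℕ → ℕ | IsArr m x g}.ncard = cnt m x := by
  intro m
  induction m with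
  | zero =>
    intro x _ _
    rw [isArr_zero]
    simp [cnt]
  | succ m ih =>
    intro x hinc h0
    classical
    have hpos : ∀ j ≤ m+1, 1 ≤ x j := by
      intro j hj
      induction j with
      | zero => exact h0
      | succ k ihk => have := hinc k (by omega); have := ihk (by omega); omega
    set box := Fintype.piFinset (fun j : Fin (m+1) => Finset.Icc (x j) (x ((j:ℕ)+1) - 1)) with hbox
    rw [cnt_succ, Set.ncard_eq_toFinset_card _ (arr_finite (m+1) x)]
    rw [Finset.card_eq_sum_card_fiberwise
      (f := fun g (j : Fin (m+1)) => g m (j:ℕ)) (t := box) ?_]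
    · apply Finset.sum_congr rfl
      intro s hs
      have hsmem : ∀ j : Fin (m+1), x j ≤ s j ∧ s j ≤ x ((j:ℕ)+1) - 1 := by
        intro j
        have := Fintype.mem_piFinset.1 hs j
        rwa [Finset.mem_Icc] at this
      have hsmem' : ∀ j (h : j < m+1), x j ≤ s ⟨j, h⟩ ∧ s ⟨j, h⟩ < x (j+1) := by
        intro j h
        have h1 : x j ≤ s ⟨j, h⟩ := by simpa using (hsmem ⟨j, h⟩).1
        have h2 : s ⟨j, h⟩ ≤ x (j+1) - 1 := by simpa using (hsmem ⟨j, h⟩).2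
        have h3 := hpos (j+1) (by omega)
        exact ⟨h1, by omega⟩
      have hs_ext : ∀ j (h : j < m+1), ext (m+1) s j = s ⟨j, h⟩ := fun j h => dif_pos h
      have hinc' : ∀ j, j < m → ext (m+1) s j < ext (m+1) s (j+1) := by
        intro j hj
        have e1 : ext (m+1) s j = s ⟨j, by omega⟩ := hs_ext j (by omega)
        have e2 : ext (m+1) s (j+1) = s ⟨j+1, by omega⟩ := hs_ext (j+1) (by omega)
        rw [e1, e2]
        have h2 := (hsmem' j (by omega)).2
        have h1 := (hsmem' (j+1) (by omega)).1
        omega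
      have h0' : 1 ≤ ext (m+1) s 0 := by
        have e1 : ext (m+1) s 0 = s ⟨0, by omega⟩ := hs_ext 0 (by omega)
        rw [e1]
        have h1 := (hsmem' 0 (by omega)).1
        omega
      have key : (Finset.filter (fun g => (fun (j : Fin (m+1)) => g m (j:ℕ)) = s)
          (arr_finite (m+1) x).toFinset).card
          = {g : ℕ → ℕ → ℕ | IsArr m (ext (m+1) s) g}.ncard := by
        rw [Set.ncard_eq_toFinset_card _ (arr_finite m (ext (m+1) s))]
        apply Finset.card_bij'
          (i := fun g _ => fun i j => if i ≤ m ∧ j ≤ i then g i j else 0)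
          (j := fun h _ => fun i j => if i ≤ m then h i j else
            if i = m+1 ∧ j ≤ m+1 then x j else 0)
        · -- trunc maps into arrays of order m
          intro g hg
          rw [Finset.mem_filter] at hg
          obtain ⟨hg1, hg2⟩ := hg
          rw [Set.Finite.mem_toFinset, Set.mem_setOf_eq] at hg1
          rw [Set.Finite.mem_toFinset, Set.mem_setOf_eq]
          refine ⟨?_, ?_, ?_⟩
          · intro i j h1 h2 h3
            dsimp only
            rw [if_pos ⟨h2, by omega⟩, if_pos (⟨by omega, h3⟩ : i-1 ≤ m ∧ j ≤ i-1),
              if_pos (⟨h2, by omega⟩ : i ≤ m ∧ j+1 ≤ i)]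
            exact hg1.1 i j h1 (by omega) h3
          · intro j hj
            dsimp only
            rw [if_pos ⟨le_refl m, hj⟩, hs_ext j (by omega)]
            have := congrFun hg2 ⟨j, by omega⟩
            simpa using this
          · intro i j h
            dsimp only
            rw [if_neg (by tauto)]
        · -- glue maps into fiber
          intro h hh
          rw [Set.Finite.mem_toFinset, Set.mem_setOf_eq] at hh
          rw [Finset.mem_filter, Set.Finite.mem_toFinset, Set.mem_setOf_eq]
          constructor
          · refine ⟨?_, ?_, ?_⟩
            · intro i j h1 h2 h3
              dsimp only
              by_cases hi : i ≤ m
              · rw [if_pos hi, if_pos (by omega : i - 1 ≤ m), if_pos hi]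
                exact hh.1 i j h1 hi h3
              · have hi' : i = m+1 := by omega
                subst hi'
                have hj : j ≤ m := by omega
                simp only [Nat.add_sub_cancel]
                have hbot : h m j = ext (m+1) s j := hh.2.1 j (by omega)
                have hx1 : x j ≤ ext (m+1) s j := by
                  rw [hs_ext j (by omega)]; exact (hsmem' j (by omega)).1
                have hx2 : ext (m+1) s j < x (j+1) := by
                  rw [hs_ext j (by omega)]; exact (hsmem' j (by omega)).2
                simp only [true_and]
                split_ifs <;> omega
            · intro j hj
              dsimp only
              rw [if_neg (by omega), if_pos ⟨rfl, hj⟩]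
            · intro i j hij
              dsimp only
              by_cases hi : i ≤ m
              · rw [if_pos hi]; exact hh.2.2 i j (by omega)
              · rw [if_neg hi, if_neg (by omega)]
          · funext j
            dsimp only
            have hjm : (j:ℕ) < m + 1 := j.isLt
            rw [if_pos (le_refl m)]
            have := hh.2.1 (j:ℕ) (by omega)
            rw [this, hs_ext _ hjm]
        · -- glue ∘ trunc = id
          intro g hg
          rw [Finset.mem_filter, Set.Finite.mem_toFinset, Set.mem_setOf_eq] at hg
          funext i j
          dsimp only
          by_cases hi : i ≤ m
          · rw [if_pos hi]
            by_cases hj : j ≤ i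
            · rw [if_pos ⟨hi, hj⟩]
            · rw [if_neg (by omega)]
              exact (hg.1.2.2 i j (by omega)).symm
          · rw [if_neg hi]
            by_cases hij : i = m+1 ∧ j ≤ m+1
            · rw [if_pos hij]
              obtain ⟨rfl, hj⟩ := hij
              exact (hg.1.2.1 j hj).symm
            · rw [if_neg hij]
              exact (hg.1.2.2 i j (by omega)).symm
        · -- trunc ∘ glue = id
          intro h hh
          rw [Set.Finite.mem_toFinset, Set.mem_setOf_eq] at hh
          funext i j
          dsimp only
          by_cases hij : i ≤ m ∧ j ≤ i
          · rw [if_pos hij, if_pos hij.1]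
          · rw [if_neg hij]
            push_neg at hij
            exact (hh.2.2 i j (by omega)).symm
      exact key.trans (ih _ hinc' h0')
    · -- fibers land in box
      intro g hg
      rw [Finset.mem_coe, Set.Finite.mem_toFinset, Set.mem_setOf_eq] at hg
      rw [Finset.mem_coe, hbox, Fintype.mem_piFinset]
      intro j
      rw [Finset.mem_Icc]
      have hjm : (j:ℕ) < m + 1 := j.isLt
      have hint := hg.1 (m+1) (j:ℕ) (by omega) (le_refl _) (by omega)
      have hb1 : g (m+1) (j:ℕ) = x (j:ℕ) := hg.2.1 _ (by omega)
      have hb2 : g (m+1) ((j:ℕ)+1) = x ((j:ℕ)+1) := hg.2.1 _ (by omega)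
      rw [show m+1-1 = m from rfl] at hint
      rw [hb1, hb2] at hint
      exact ⟨hint.1, by dsimp only; omega⟩

lemma piFinset_filter_card {n : ℕ} (S : Fin n → Finset ℕ) (p : Fin n → ℕ → Prop)
    [∀ i d, Decidable (p i d)] :
    ((Fintype.piFinset S).filter (fun f => ∀ i, p i (f i))).card
      = ∏ i, ((S i).filter (fun d => p i d)).card := by
  rw [← Fintype.card_piFinset]
  congr 1
  ext f
  simp only [Finset.mem_filter, Fintype.mem_piFinset, ← forall_and]

lemma card_filter_and_not (s : Finset ℕ) (A B : ℕ → Prop) [DecidablePred A] [DecidablePred B]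
    (h : ∀ d ∈ s, B d → A d) :
    (s.filter (fun d => A d ∧ ¬ B d)).card = (s.filter A).card - (s.filter B).card := by
  have he : s.filter (fun d => A d ∧ ¬ B d) = s.filter A \ s.filter B := by
    ext d
    simp only [mem_filter, mem_sdiff]
    tauto
  rw [he, card_sdiff_of_subset]
  intro d hd
  rw [mem_filter] at hd ⊢
  exact ⟨hd.1, h d hd.1 hd.2⟩

lemma Qlem : ∀ (K : ℕ) (P Q : ℕ → ℕ),
    (∀ k < K, Q k ≤ P k ∧ Q k ≤ 2 ∧ (0 < Q k → P k = 2 ∧ P (k+1) = 2)) →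
    ∏ k ∈ Finset.range (K+1), (P k - (if k = 0 then 0 else Q (k-1)))
      = P K * ∏ k ∈ Finset.range K, (P k - Q k) := by
  intro K
  induction K with
  | zero => intro P Q _; simp
  | succ K ih =>
    intro P Q h
    rw [Finset.prod_range_succ _ (K+1), ih P Q (fun k hk => h k (by omega)),
      Finset.prod_range_succ _ K]
    have hK := h K (by omega)
    rcases Nat.eq_zero_or_pos (Q K) with h0 | h0
    · rw [if_neg (by omega : ¬(K + 1 = 0))]
      simp only [Nat.add_sub_cancel, h0, Nat.sub_zero]
      ring
    · obtain ⟨e1, e2⟩ := hK.2.2 h0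
      rw [if_neg (by omega : ¬(K + 1 = 0))]
      simp only [Nat.add_sub_cancel, e1, e2]
      ring

lemma two_card : ({0,1} : Finset ℕ).card = 2 := rfl

lemma pointwise (m : ℕ) (x : ℕ → ℕ) (T : ℕ → ℕ)
    (hinc : ∀ j, j < m+1 → x j < x (j+1))
    (hT : ∀ j, j < m+1 → x j ≤ T j ∧ T j ≤ x (j+1))
    (hTinc : ∀ j, j < m → T j < T (j+1)) :
    ((Fintype.piFinset (fun _ : Fin (m+2) => ({0,1}:Finset ℕ))).filter
      (fun δ => ∀ k : Fin (m+2),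
        ((k:ℕ) ≤ m → x k + δ k ≤ T k) ∧ (1 ≤ (k:ℕ) → T ((k:ℕ)-1) < x k + δ k))).card
    = 2 * ((Fintype.piFinset (fun _ : Fin (m+1) => ({0,1}:Finset ℕ))).filter
      (fun δ => ∀ k : Fin (m+1), x k + δ k ≤ T k ∧ T k < x ((k:ℕ)+1) + δ k)).card := by
  classical
  set P : ℕ → ℕ := fun k =>
    if k ≤ m then (({0,1}:Finset ℕ).filter (fun d => x k + d ≤ T k)).card else 2 with hP
  set Q : ℕ → ℕ := fun k =>
    (({0,1}:Finset ℕ).filter (fun d => x (k+1) + d ≤ T k)).card with hQ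
  have hQle2 : ∀ k, Q k ≤ 2 := by
    intro k
    rw [hQ]
    exact le_trans (Finset.card_filter_le _ _) (le_of_eq two_card)
  -- the LHS as a product
  rw [piFinset_filter_card _ (fun (k : Fin (m+2)) (d : ℕ) =>
      ((k:ℕ) ≤ m → x k + d ≤ T k) ∧ (1 ≤ (k:ℕ) → T ((k:ℕ)-1) < x k + d))]
  rw [piFinset_filter_card _ (fun (k : Fin (m+1)) (d : ℕ) =>
      x k + d ≤ T k ∧ T k < x ((k:ℕ)+1) + d)]
  rw [Fin.prod_univ_eq_prod_range (fun k =>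
      (({0,1}:Finset ℕ).filter (fun d =>
        (k ≤ m → x k + d ≤ T k) ∧ (1 ≤ k → T (k-1) < x k + d))).card) (m+2),
    Fin.prod_univ_eq_prod_range (fun k =>
      (({0,1}:Finset ℕ).filter (fun d =>
        x k + d ≤ T k ∧ T k < x (k+1) + d)).card) (m+1)]
  have claim2 : ∀ k, k < m+1 →
      (({0,1}:Finset ℕ).filter (fun d => x k + d ≤ T k ∧ T k < x (k+1) + d)).card
        = P k - Q k := by
    intro k hk
    have e0 : (({0,1}:Finset ℕ).filter (fun d => x k + d ≤ T k ∧ T k < x (k+1) + d))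
        = (({0,1}:Finset ℕ).filter (fun d => (x k + d ≤ T k) ∧ ¬(x (k+1) + d ≤ T k))) := by
      apply Finset.filter_congr
      intro d _
      constructor
      · rintro ⟨a, b⟩; exact ⟨a, by omega⟩
      · rintro ⟨a, b⟩; exact ⟨a, by omega⟩
    rw [e0, card_filter_and_not _ _ _ ?_]
    · rw [hP]
      simp only
      rw [if_pos (by omega : k ≤ m)]
    · intro d _ hB
      have := hinc k hk
      omega
  have claim1 : ∀ k, k < m+2 →
      (({0,1}:Finset ℕ).filter (fun d =>
        (k ≤ m → x k + d ≤ T k) ∧ (1 ≤ k → T (k-1) < x k + d))).card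
        = P k - (if k = 0 then 0 else Q (k-1)) := by
    intro k hk
    rcases Nat.eq_zero_or_pos k with rfl | hk1
    · rw [if_pos rfl, Nat.sub_zero]
      have e0 : (({0,1}:Finset ℕ).filter (fun d =>
          (0 ≤ m → x 0 + d ≤ T 0) ∧ (1 ≤ 0 → T (0-1) < x 0 + d)))
          = (({0,1}:Finset ℕ).filter (fun d => x 0 + d ≤ T 0)) := by
        apply Finset.filter_congr
        intro d _
        constructor
        · rintro ⟨a, _⟩; exact a (by omega)
        · intro a; exact ⟨fun _ => a, by omega⟩
      rw [e0, hP]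
      simp only
      rw [if_pos (by omega : 0 ≤ m)]
    · rw [if_neg (by omega : ¬(k = 0))]
      rcases Nat.lt_or_ge k (m+1) with hkm | hkm
      · -- 1 ≤ k ≤ m
        have e0 : (({0,1}:Finset ℕ).filter (fun d =>
            (k ≤ m → x k + d ≤ T k) ∧ (1 ≤ k → T (k-1) < x k + d)))
            = (({0,1}:Finset ℕ).filter (fun d =>
              (x k + d ≤ T k) ∧ ¬(x k + d ≤ T (k-1)))) := by
          apply Finset.filter_congr
          intro d _
          constructor
          · rintro ⟨a, b⟩; exact ⟨a (by omega), by have := b (by omega); omega⟩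
          · rintro ⟨a, b⟩; exact ⟨fun _ => a, fun _ => by omega⟩
        rw [e0, card_filter_and_not _ _ _ ?_]
        · rw [hP, hQ]
          simp only
          rw [if_pos (by omega : k ≤ m), show k - 1 + 1 = k by omega]
        · intro d _ hB
          have hTk : T (k-1) < T (k-1+1) := hTinc (k-1) (by omega)
          rw [show k - 1 + 1 = k by omega] at hTk
          omega
      · -- k = m+1
        have hk2 : k = m+1 := by omega
        subst hk2
        have e0 : (({0,1}:Finset ℕ).filter (fun d =>
            (m+1 ≤ m → x (m+1) + d ≤ T (m+1)) ∧ (1 ≤ m+1 → T (m+1-1) < x (m+1) + d)))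
            = (({0,1}:Finset ℕ).filter (fun d =>
              True ∧ ¬(x (m+1) + d ≤ T m))) := by
          apply Finset.filter_congr
          intro d _
          constructor
          · rintro ⟨_, b⟩
            have := b (by omega)
            simp only [Nat.add_sub_cancel] at this
            exact ⟨trivial, by omega⟩
          · rintro ⟨_, b⟩
            refine ⟨fun h => by omega, fun _ => ?_⟩
            simp only [Nat.add_sub_cancel]
            omega
        rw [e0, card_filter_and_not _ _ _ (fun d _ _ => trivial)]
        rw [Finset.filter_true, two_card, hP, hQ]
        simp only
        rw [if_neg (by omega : ¬(m+1 ≤ m)), show m+1-1 = m by omega]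
  have claim3 : ∀ k, k < m+1 → Q k ≤ P k ∧ Q k ≤ 2 ∧ (0 < Q k → P k = 2 ∧ P (k+1) = 2) := by
    intro k hk
    have hsub : Q k ≤ P k := by
      rw [hP, hQ]
      simp only
      rw [if_pos (by omega : k ≤ m)]
      apply Finset.card_le_card
      intro d hd
      rw [Finset.mem_filter] at hd ⊢
      have := hinc k hk
      exact ⟨hd.1, by omega⟩
    refine ⟨hsub, hQle2 k, ?_⟩
    intro hQpos
    have hxT : x (k+1) ≤ T k := by
      rw [hQ] at hQpos
      simp only at hQpos
      obtain ⟨d, hd⟩ := Finset.card_pos.mp hQpos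
      rw [Finset.mem_filter] at hd
      omega
    constructor
    · rw [hP]
      simp only
      rw [if_pos (by omega : k ≤ m)]
      rw [Finset.filter_true_of_mem, two_card]
      intro d hd
      have hd1 : d ≤ 1 := by
        rcases Finset.mem_insert.mp hd with rfl | h
        · omega
        · rw [Finset.mem_singleton] at h; omega
      have := hinc k hk
      omega
    · rw [hP]
      simp only
      by_cases hk1 : k + 1 ≤ m
      · rw [if_pos hk1]
        rw [Finset.filter_true_of_mem, two_card]
        intro d hd
        have hd1 : d ≤ 1 := by
          rcases Finset.mem_insert.mp hd with rfl | h
          · omega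
          · rw [Finset.mem_singleton] at h; omega
        have hTk : T k < T (k+1) := hTinc k (by omega)
        omega
      · rw [if_neg hk1]
  calc ∏ k ∈ Finset.range (m+2), (({0,1}:Finset ℕ).filter (fun d =>
        (k ≤ m → x k + d ≤ T k) ∧ (1 ≤ k → T (k-1) < x k + d))).card
      = ∏ k ∈ Finset.range (m+2), (P k - (if k = 0 then 0 else Q (k-1))) := by
        apply Finset.prod_congr rfl
        intro k hk
        exact claim1 k (Finset.mem_range.mp hk)
    _ = P (m+1) * ∏ k ∈ Finset.range (m+1), (P k - Q k) := Qlem (m+1) P Q claim3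
    _ = 2 * ∏ k ∈ Finset.range (m+1), (P k - Q k) := by
        congr 1
        rw [hP]
        simp only
        rw [if_neg (by omega : ¬(m+1 ≤ m))]
    _ = 2 * ∏ k ∈ Finset.range (m+1), (({0,1}:Finset ℕ).filter (fun d =>
        x k + d ≤ T k ∧ T k < x (k+1) + d)).card := by
        congr 1
        apply Finset.prod_congr rfl
        intro k hk
        exact (claim2 k (Finset.mem_range.mp hk)).symm

lemma ext_coe {m : ℕ} (δ : Fin m → ℕ) (k : Fin m) : ext m δ (k:ℕ) = δ k := by
  rw [ext]
  simp only [dif_pos k.isLt]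

lemma mem_boxdd_iff (m : ℕ) (x : ℕ → ℕ) (hpos : ∀ j ≤ m+1, 1 ≤ x j)
    (t : Fin (m+1) → ℕ) (δ : Fin (m+2) → ℕ) :
    (t ∈ Fintype.piFinset (fun j : Fin (m+1) =>
       Finset.Icc (x j + ext (m+2) δ j) (x ((j:ℕ)+1) + ext (m+2) δ ((j:ℕ)+1) - 1)))
    ↔ ∀ k : Fin (m+2), ((k:ℕ) ≤ m → x k + δ k ≤ ext (m+1) t k) ∧
        (1 ≤ (k:ℕ) → ext (m+1) t ((k:ℕ)-1) < x k + δ k) := by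
  rw [Fintype.mem_piFinset]
  constructor
  · intro hj k
    constructor
    · intro hkm
      have h := (Finset.mem_Icc.1 (hj ⟨(k:ℕ), by omega⟩)).1
      dsimp only at h
      have e1 : ext (m+2) δ (k:ℕ) = δ k := ext_coe δ k
      have e2 : ext (m+1) t (k:ℕ) = t ⟨(k:ℕ), by omega⟩ := dif_pos (by omega)
      rw [e1] at h
      rw [e2]
      exact h
    · intro hk1
      have h := (Finset.mem_Icc.1 (hj ⟨(k:ℕ)-1, by omega⟩)).2
      dsimp only at h
      rw [show (k:ℕ)-1+1 = (k:ℕ) by omega] at h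
      have e1 : ext (m+2) δ (k:ℕ) = δ k := ext_coe δ k
      have e2 : ext (m+1) t ((k:ℕ)-1) = t ⟨(k:ℕ)-1, by omega⟩ := dif_pos (by omega)
      rw [e1] at h
      rw [e2]
      have hx1 : 1 ≤ x (k:ℕ) := hpos _ (by omega)
      omega
  · intro hk j
    rw [Finset.mem_Icc]
    have hj1 : (j:ℕ) < m+1 := j.isLt
    constructor
    · have h := (hk ⟨(j:ℕ), by omega⟩).1 (by dsimp only; omega)
      dsimp only at h
      have e1 : ext (m+1) t (j:ℕ) = t j := ext_coe t j
      have e2 : ext (m+2) δ (j:ℕ) = δ ⟨(j:ℕ), by omega⟩ := dif_pos (by omega)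
      rw [e1] at h
      rw [e2]
      exact h
    · have h := (hk ⟨(j:ℕ)+1, by omega⟩).2 (by dsimp only; omega)
      dsimp only at h
      rw [show (j:ℕ)+1-1 = (j:ℕ) by omega] at h
      have e1 : ext (m+1) t (j:ℕ) = t j := ext_coe t j
      have e2 : ext (m+2) δ ((j:ℕ)+1) = δ ⟨(j:ℕ)+1, by omega⟩ := dif_pos (by omega)
      rw [e1] at h
      rw [e2]
      have hx1 : 1 ≤ x ((j:ℕ)+1) := hpos _ (by omega)
      omega

lemma count_claim (m : ℕ) (x : ℕ → ℕ) (hpos : ∀ j ≤ m+1, 1 ≤ x j) (t : Fin (m+1) → ℕ) :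
    ∑ s ∈ Fintype.piFinset (fun j : Fin (m+1) => Finset.Icc (x j) (x ((j:ℕ)+1) - 1)),
      ((Fintype.piFinset (fun _ : Fin (m+1) => ({0,1} : Finset ℕ))).filter
        (fun δ => (fun k => s k + δ k) = t)).card
    = ((Fintype.piFinset (fun _ : Fin (m+1) => ({0,1} : Finset ℕ))).filter
        (fun δ => ∀ k : Fin (m+1), x k + δ k ≤ t k ∧ t k < x ((k:ℕ)+1) + δ k)).card := by
  classical
  rw [Finset.card_filter]
  have e1 : ∀ s : Fin (m+1) → ℕ, ((Fintype.piFinset (fun _ : Fin (m+1) => ({0,1} : Finset ℕ))).filter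
      (fun δ => (fun k => s k + δ k) = t)).card
      = ∑ δ ∈ Fintype.piFinset (fun _ : Fin (m+1) => ({0,1} : Finset ℕ)),
          (if (fun k => s k + δ k) = t then 1 else 0) := fun s => Finset.card_filter _ _
  rw [Finset.sum_congr rfl (fun s _ => e1 s), Finset.sum_comm]
  apply Finset.sum_congr rfl
  intro δ hδ
  have hδ1 : ∀ k : Fin (m+1), δ k ≤ 1 := by
    intro k
    have := Fintype.mem_piFinset.1 hδ k
    rcases Finset.mem_insert.mp this with h | h
    · omega
    · rw [Finset.mem_singleton] at h; omega
  have e2 : ∑ s ∈ Fintype.piFinset (fun j : Fin (m+1) => Finset.Icc (x j) (x ((j:ℕ)+1) - 1)),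
      (if (fun k => s k + δ k) = t then 1 else 0)
      = ((Fintype.piFinset (fun j : Fin (m+1) => Finset.Icc (x j) (x ((j:ℕ)+1) - 1))).filter
          (fun s => (fun k => s k + δ k) = t)).card := (Finset.card_filter _ _).symm
  rw [e2]
  clear e1 e2
  by_cases hp : ∀ k : Fin (m+1), x k + δ k ≤ t k ∧ t k < x ((k:ℕ)+1) + δ k
  · rw [if_pos hp]
    have hsing : (Fintype.piFinset (fun j : Fin (m+1) =>
        Finset.Icc (x j) (x ((j:ℕ)+1) - 1))).filter (fun s => (fun k => s k + δ k) = t)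
        = {fun k => t k - δ k} := by
      ext s
      rw [Finset.mem_filter, Finset.mem_singleton, Fintype.mem_piFinset]
      constructor
      · rintro ⟨_, hst⟩
        funext k
        have h5 : s k + δ k = t k := congrFun hst k
        clear hst
        omega
      · rintro rfl
        constructor
        · intro k
          dsimp only
          rw [Finset.mem_Icc]
          have h1 := (hp k).1
          have h2 := (hp k).2
          have h3 := hpos ((k:ℕ)+1) (by omega)
          omega
        · funext k
          dsimp only
          have h1 := (hp k).1
          omega
    rw [hsing, Finset.card_singleton]
  · rw [if_neg hp]
    rw [Finset.card_eq_zero, Finset.filter_eq_empty_iff]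
    intro s hs hst
    apply hp
    intro k
    have hmem := Fintype.mem_piFinset.1 hs k
    rw [Finset.mem_Icc] at hmem
    have h5 : s k + δ k = t k := congrFun hst k
    clear hst
    have h3 := hpos ((k:ℕ)+1) (by omega)
    have h4 := hδ1 k
    omega

abbrev boxdd (m : ℕ) (x : ℕ → ℕ) (δ : Fin (m+2) → ℕ) : Finset (Fin (m+1) → ℕ) :=
  Fintype.piFinset (fun j : Fin (m+1) =>
    Finset.Icc (x j + ext (m+2) δ j) (x ((j:ℕ)+1) + ext (m+2) δ ((j:ℕ)+1) - 1))

set_option maxHeartbeats 1600000 in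
lemma main_lemma : ∀ (m : ℕ) (x : ℕ → ℕ), (∀ j, j < m → x j < x (j+1)) → 1 ≤ x 0 →
    ∑ δ ∈ Fintype.piFinset (fun _ : Fin (m+1) => ({0,1} : Finset ℕ)),
      cnt m (fun j => x j + ext (m+1) δ j) = 2^(m+1) * cnt m x := by
  intro m
  induction m with
  | zero =>
    intro x _ _
    have h1 : ∀ δ : Fin 1 → ℕ, cnt 0 (fun j => x j + ext 1 δ j) = 1 := fun _ => rfl
    rw [Finset.sum_congr rfl (fun δ _ => h1 δ), Finset.sum_const, smul_eq_mul, mul_one,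
      Fintype.card_piFinset]
    show ∏ _i : Fin 1, ({0,1} : Finset ℕ).card = 2^1 * cnt 0 x
    simp [cnt]
  | succ m ih =>
    intro x hinc h0
    classical
    have hpos : ∀ j ≤ m+1, 1 ≤ x j := by
      intro j hj
      induction j with
      | zero => exact h0
      | succ k ihk => have := hinc k (by omega); have := ihk (by omega); omega
    have hd01 : ∀ (n : ℕ) (δ : Fin n → ℕ),
        δ ∈ Fintype.piFinset (fun _ : Fin n => ({0,1} : Finset ℕ)) → ∀ k, δ k ≤ 1 := by
      intro n δ hδ k
      have := Fintype.mem_piFinset.1 hδ k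
      rcases Finset.mem_insert.mp this with h | h
      · omega
      · rw [Finset.mem_singleton] at h; omega
    -- LHS chain
    have e_expand : ∀ δ : Fin (m+2) → ℕ, cnt (m+1) (fun j => x j + ext (m+2) δ j)
        = ∑ s ∈ boxdd m x δ, cnt m (ext (m+1) s) := fun δ => cnt_succ m _
    have hsub : ∀ δ ∈ Fintype.piFinset (fun _ : Fin (m+2) => ({0,1} : Finset ℕ)),
        boxdd m x δ ⊆ Fintype.piFinset (fun j : Fin (m+1) =>
          Finset.Icc (x j) (x ((j:ℕ)+1))) := by
      intro δ hδ t ht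
      rw [Fintype.mem_piFinset] at ht ⊢
      intro j
      have h := ht j
      rw [Finset.mem_Icc] at h ⊢
      have h1 : ext (m+2) δ ((j:ℕ)+1) ≤ 1 := by
        have e : ext (m+2) δ ((j:ℕ)+1) = δ ⟨(j:ℕ)+1, by omega⟩ := dif_pos (by omega)
        rw [e]
        exact hd01 _ δ hδ _
      have h2 : 1 ≤ x ((j:ℕ)+1) := hpos _ (by omega)
      omega
    have lhs_eq : ∑ δ ∈ Fintype.piFinset (fun _ : Fin (m+2) => ({0,1} : Finset ℕ)),
        cnt (m+1) (fun j => x j + ext (m+2) δ j)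
        = ∑ t ∈ Fintype.piFinset (fun j : Fin (m+1) => Finset.Icc (x j) (x ((j:ℕ)+1))),
            ((Fintype.piFinset (fun _ : Fin (m+2) => ({0,1} : Finset ℕ))).filter
              (fun δ => t ∈ boxdd m x δ)).card * cnt m (ext (m+1) t) := by
      calc ∑ δ ∈ Fintype.piFinset (fun _ : Fin (m+2) => ({0,1} : Finset ℕ)),
            cnt (m+1) (fun j => x j + ext (m+2) δ j)
          = ∑ δ ∈ Fintype.piFinset (fun _ : Fin (m+2) => ({0,1} : Finset ℕ)),
              ∑ t ∈ Fintype.piFinset (fun j : Fin (m+1) => Finset.Icc (x j) (x ((j:ℕ)+1))),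
                (if t ∈ boxdd m x δ then cnt m (ext (m+1) t) else 0) := by
            apply Finset.sum_congr rfl
            intro δ hδ
            rw [e_expand δ]
            rw [Finset.sum_ite_mem, Finset.inter_eq_right.mpr (hsub δ hδ)]
        _ = ∑ t ∈ Fintype.piFinset (fun j : Fin (m+1) => Finset.Icc (x j) (x ((j:ℕ)+1))),
              ∑ δ ∈ Fintype.piFinset (fun _ : Fin (m+2) => ({0,1} : Finset ℕ)),
                (if t ∈ boxdd m x δ then cnt m (ext (m+1) t) else 0) := Finset.sum_comm
        _ = _ := by
            apply Finset.sum_congr rfl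
            intro t _
            rw [← Finset.sum_filter, Finset.sum_const, smul_eq_mul]
    -- RHS chain
    have rhs_eq : 2^(m+2) * cnt (m+1) x
        = 2 * ∑ t ∈ Fintype.piFinset (fun j : Fin (m+1) => Finset.Icc (x j) (x ((j:ℕ)+1))),
            ((Fintype.piFinset (fun _ : Fin (m+1) => ({0,1} : Finset ℕ))).filter
              (fun δ => ∀ k : Fin (m+1), x k + δ k ≤ t k ∧ t k < x ((k:ℕ)+1) + δ k)).card
              * cnt m (ext (m+1) t) := by
      rw [cnt_succ]
      calc 2^(m+2) * ∑ s ∈ Fintype.piFinset (fun j : Fin (m+1) =>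
              Finset.Icc (x j) (x ((j:ℕ)+1) - 1)), cnt m (ext (m+1) s)
          = 2 * ∑ s ∈ Fintype.piFinset (fun j : Fin (m+1) =>
              Finset.Icc (x j) (x ((j:ℕ)+1) - 1)), 2^(m+1) * cnt m (ext (m+1) s) := by
            rw [Finset.mul_sum, Finset.mul_sum]
            apply Finset.sum_congr rfl
            intro s _
            ring
        _ = 2 * ∑ s ∈ Fintype.piFinset (fun j : Fin (m+1) =>
              Finset.Icc (x j) (x ((j:ℕ)+1) - 1)),
              ∑ δ ∈ Fintype.piFinset (fun _ : Fin (m+1) => ({0,1} : Finset ℕ)),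
                cnt m (fun j => ext (m+1) s j + ext (m+1) δ j) := by
            congr 1
            apply Finset.sum_congr rfl
            intro s hs
            have hmem : ∀ j (h : j < m+1), x j ≤ s ⟨j, h⟩ ∧ s ⟨j, h⟩ ≤ x (j+1) - 1 := by
              intro j h
              have := Finset.mem_Icc.1 (Fintype.mem_piFinset.1 hs ⟨j, h⟩)
              dsimp only at this
              exact this
            have hs1 : ∀ j, j < m → ext (m+1) s j < ext (m+1) s (j+1) := by
              intro j hj
              have e1 : ext (m+1) s j = s ⟨j, by omega⟩ := dif_pos (by omega)
              have e2 : ext (m+1) s (j+1) = s ⟨j+1, by omega⟩ := dif_pos (by omega)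
              rw [e1, e2]
              have h2 := (hmem j (by omega)).2
              have h1 := (hmem (j+1) (by omega)).1
              have h3 := hpos (j+1) (by omega)
              omega
            have hs0 : 1 ≤ ext (m+1) s 0 := by
              have e1 : ext (m+1) s 0 = s ⟨0, by omega⟩ := dif_pos (by omega)
              rw [e1]
              have h1 := (hmem 0 (by omega)).1
              omega
            exact (ih (ext (m+1) s) hs1 hs0).symm
        _ = 2 * ∑ s ∈ Fintype.piFinset (fun j : Fin (m+1) =>
              Finset.Icc (x j) (x ((j:ℕ)+1) - 1)),
              ∑ δ ∈ Fintype.piFinset (fun _ : Fin (m+1) => ({0,1} : Finset ℕ)),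
                cnt m (ext (m+1) (fun k => s k + δ k)) := by
            congr 1
            apply Finset.sum_congr rfl
            intro s _
            apply Finset.sum_congr rfl
            intro δ _
            congr 1
            funext j
            by_cases hj : j < m+1
            · simp only [ext, dif_pos hj]
            · simp only [ext, dif_neg hj]
        _ = 2 * ∑ s ∈ Fintype.piFinset (fun j : Fin (m+1) =>
              Finset.Icc (x j) (x ((j:ℕ)+1) - 1)),
              ∑ δ ∈ Fintype.piFinset (fun _ : Fin (m+1) => ({0,1} : Finset ℕ)),
                ∑ t ∈ Fintype.piFinset (fun j : Fin (m+1) => Finset.Icc (x j) (x ((j:ℕ)+1))),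
                  (if (fun k => s k + δ k) = t then cnt m (ext (m+1) t) else 0) := by
            congr 1
            apply Finset.sum_congr rfl
            intro s hs
            apply Finset.sum_congr rfl
            intro δ hδ
            have hmem_sd : (fun k => s k + δ k) ∈ Fintype.piFinset
                (fun j : Fin (m+1) => Finset.Icc (x j) (x ((j:ℕ)+1))) := by
              rw [Fintype.mem_piFinset]
              intro k
              have h1 := Finset.mem_Icc.1 (Fintype.mem_piFinset.1 hs k)
              have h2 := hd01 _ δ hδ k
              have h3 := hpos ((k:ℕ)+1) (by omega)
              rw [Finset.mem_Icc]
              omega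
            rw [Finset.sum_ite_eq, if_pos hmem_sd]
        _ = 2 * ∑ s ∈ Fintype.piFinset (fun j : Fin (m+1) =>
                Finset.Icc (x j) (x ((j:ℕ)+1) - 1)),
              ∑ t ∈ Fintype.piFinset (fun j : Fin (m+1) => Finset.Icc (x j) (x ((j:ℕ)+1))),
                ∑ δ ∈ Fintype.piFinset (fun _ : Fin (m+1) => ({0,1} : Finset ℕ)),
                  (if (fun k => s k + δ k) = t then cnt m (ext (m+1) t) else 0) := by
            congr 1
            apply Finset.sum_congr rfl
            intro s _
            exact Finset.sum_comm
        _ = 2 * ∑ t ∈ Fintype.piFinset (fun j : Fin (m+1) => Finset.Icc (x j) (x ((j:ℕ)+1))),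
              ∑ s ∈ Fintype.piFinset (fun j : Fin (m+1) =>
                Finset.Icc (x j) (x ((j:ℕ)+1) - 1)),
                ∑ δ ∈ Fintype.piFinset (fun _ : Fin (m+1) => ({0,1} : Finset ℕ)),
                  (if (fun k => s k + δ k) = t then cnt m (ext (m+1) t) else 0) := by
            congr 1
            exact Finset.sum_comm
        _ = 2 * ∑ t ∈ Fintype.piFinset (fun j : Fin (m+1) => Finset.Icc (x j) (x ((j:ℕ)+1))),
              (∑ s ∈ Fintype.piFinset (fun j : Fin (m+1) =>
                Finset.Icc (x j) (x ((j:ℕ)+1) - 1)),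
                ((Fintype.piFinset (fun _ : Fin (m+1) => ({0,1} : Finset ℕ))).filter
                  (fun δ => (fun k => s k + δ k) = t)).card) * cnt m (ext (m+1) t) := by
            congr 1
            apply Finset.sum_congr rfl
            intro t _
            rw [Finset.sum_mul]
            apply Finset.sum_congr rfl
            intro s _
            rw [← Finset.sum_filter, Finset.sum_const, smul_eq_mul]
        _ = _ := by
            congr 1
            apply Finset.sum_congr rfl
            intro t _
            rw [count_claim m x hpos t]
    rw [lhs_eq, rhs_eq, Finset.mul_sum]
    clear lhs_eq rhs_eq e_expand hsub hd01
    apply Finset.sum_congr rfl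
    intro t ht
    have hT : ∀ j, j < m+1 → x j ≤ ext (m+1) t j ∧ ext (m+1) t j ≤ x (j+1) := by
      intro j hj
      have e1 : ext (m+1) t j = t ⟨j, by omega⟩ := dif_pos (by omega)
      rw [e1]
      have := Finset.mem_Icc.1 (Fintype.mem_piFinset.1 ht ⟨j, by omega⟩)
      dsimp only at this
      exact this
    by_cases hstrict : ∀ j, j < m → ext (m+1) t j < ext (m+1) t (j+1)
    · have hcongr1 : (Fintype.piFinset (fun _ : Fin (m+2) => ({0,1} : Finset ℕ))).filter
          (fun δ => t ∈ boxdd m x δ)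
          = (Fintype.piFinset (fun _ : Fin (m+2) => ({0,1} : Finset ℕ))).filter
            (fun δ => ∀ k : Fin (m+2), ((k:ℕ) ≤ m → x k + δ k ≤ ext (m+1) t k) ∧
              (1 ≤ (k:ℕ) → ext (m+1) t ((k:ℕ)-1) < x k + δ k)) := by
        apply Finset.filter_congr
        intro δ _
        exact mem_boxdd_iff m x hpos t δ
      have hcongr2 : (Fintype.piFinset (fun _ : Fin (m+1) => ({0,1} : Finset ℕ))).filter
          (fun δ => ∀ k : Fin (m+1), x k + δ k ≤ t k ∧ t k < x ((k:ℕ)+1) + δ k)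
          = (Fintype.piFinset (fun _ : Fin (m+1) => ({0,1} : Finset ℕ))).filter
            (fun δ => ∀ k : Fin (m+1), x k + δ k ≤ ext (m+1) t k ∧
              ext (m+1) t k < x ((k:ℕ)+1) + δ k) := by
        apply Finset.filter_congr
        intro δ _
        constructor
        · intro h k
          rw [ext_coe t k]
          exact h k
        · intro h k
          have := h k
          rw [ext_coe t k] at this
          exact this
      rw [hcongr1, hcongr2, pointwise m x (ext (m+1) t) hinc hT hstrict]
      ring
    · push_neg at hstrict
      obtain ⟨j, hj, hle⟩ := hstrict
      have h1 : 1 ≤ ext (m+1) t (j+1) := by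
        have := (hT (j+1) (by omega)).1
        have := hpos (j+1) (by omega)
        omega
      rw [cnt_eq_zero (ext (m+1) t) hj h1 hle]
      simp

end STProof

/-- `g` is a staircase tableau of order `n`: a triangular array `(g i j)_{0 ≤ j ≤ i ≤ n}`
of positive integers satisfying the interlacing conditions
`g i j ≤ g (i-1) j < g i (j+1)` for `1 ≤ i ≤ n`, `0 ≤ j ≤ i-1`, with fixed bottom row
`g n j = 2j + 1`.  (Entries outside the triangle are normalized to `0`.) -/
def IsStaircaseTableau (n : ℕ) (g : ℕ → ℕ → ℕ) : Prop :=
  (∀ i j, j ≤ i → i ≤ n → 1 ≤ g i j) ∧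
  (∀ i j, 1 ≤ i → i ≤ n → j ≤ i - 1 →
    g i j ≤ g (i - 1) j ∧ g (i - 1) j < g i (j + 1)) ∧
  (∀ j, j ≤ n → g n j = 2 * j + 1) ∧
  (∀ i j, ¬(j ≤ i ∧ i ≤ n) → g i j = 0)

lemma ist_eq (n : ℕ) : {g : ℕ → ℕ → ℕ | IsStaircaseTableau n g}
    = {g : ℕ → ℕ → ℕ | STProof.IsArr n (fun j => 2*j+1) g} := by
  ext g
  simp only [Set.mem_setOf_eq]
  constructor
  · rintro ⟨_, h2, h3, h4⟩; exact ⟨h2, h3, h4⟩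
  · rintro ⟨h2, h3, h4⟩
    refine ⟨?_, h2, h3, h4⟩
    have key : ∀ k i j, i + k = n → j ≤ i → 1 ≤ g i j := by
      intro k
      induction k with
      | zero =>
        intro i j hi hj
        have hin : i = n := by omega
        have e : g i j = 2*j+1 := by rw [hin]; exact h3 j (by omega)
        omega
      | succ k ihk =>
        intro i j hi hj
        have h5 := (h2 (i+1) j (by omega) (by omega) (by omega : j ≤ (i+1)-1)).1
        have h6 : 1 ≤ g (i+1) j := ihk (i+1) j (by omega) (by omega)
        simp only [Nat.add_sub_cancel] at h5
        omega
    intro i j hj hi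
    exact key (n - i) i j (by omega) hj


/-- For every `n ≥ 0`, `|ST(n+1)| = 2^(n+1) · |ST(n)|`. -/
theorem stmt11 (n : ℕ) :
    {g : ℕ → ℕ → ℕ | IsStaircaseTableau (n + 1) g}.ncard =
      2 ^ (n + 1) * {g : ℕ → ℕ → ℕ | IsStaircaseTableau n g}.ncard := by
  classical
  have hinc : ∀ j, j < n+1 → (fun j => 2*j+1) j < (fun j => 2*j+1) (j+1) := by
    intro j _
    show 2*j+1 < 2*(j+1)+1
    omega
  have hinc' : ∀ j, j < n → (fun j => 2*j+1) j < (fun j => 2*j+1) (j+1) := by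
    intro j _
    show 2*j+1 < 2*(j+1)+1
    omega
  have h0 : 1 ≤ (fun j => 2*j+1) 0 := by
    show 1 ≤ 2*0+1
    omega
  rw [ist_eq (n+1), ist_eq n,
    STProof.ncard_arr (n+1) (fun j => 2*j+1) hinc h0,
    STProof.ncard_arr n (fun j => 2*j+1) hinc' h0,
    STProof.cnt_succ n (fun j => 2*j+1),
    ← STProof.main_lemma n (fun j => 2*j+1) hinc' h0]
  apply Finset.sum_nbij'
    (i := fun (s : Fin (n+1) → ℕ) (k : Fin (n+1)) => s k - (2*(k:ℕ)+1))
    (j := fun (δ : Fin (n+1) → ℕ) (k : Fin (n+1)) => 2*(k:ℕ)+1 + δ k)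
  · intro s hs
    rw [Fintype.mem_piFinset]
    intro k
    have h := Finset.mem_Icc.1 (Fintype.mem_piFinset.1 hs k)
    try dsimp only at h
    simp only [Finset.mem_insert, Finset.mem_singleton]
    omega
  · intro δ hδ
    rw [Fintype.mem_piFinset]
    intro k
    have h := Fintype.mem_piFinset.1 hδ k
    simp only [Finset.mem_insert, Finset.mem_singleton] at h
    rw [Finset.mem_Icc]
    try dsimp only
    omega
  · intro s hs
    funext k
    have h := Finset.mem_Icc.1 (Fintype.mem_piFinset.1 hs k)
    try dsimp only at h
    try dsimp only
    omega
  · intro δ hδ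
    funext k
    try dsimp only
    omega
  · intro s hs
    apply STProof.cnt_congr
    intro j hj
    have e1 : STProof.ext (n+1) s j = s ⟨j, by omega⟩ := dif_pos (by omega)
    have e2 : STProof.ext (n+1) (fun (k : Fin (n+1)) => s k - (2*(k:ℕ)+1)) j
        = s ⟨j, by omega⟩ - (2*j+1) := by
      rw [STProof.ext, dif_pos (show j < n+1 by omega)]
    have h := Finset.mem_Icc.1 (Fintype.mem_piFinset.1 hs ⟨j, by omega⟩)
    try dsimp only at h
    rw [e1, e2]
    omega
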